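/- Let B = A^{coH} ⊆ A be a faithfully flat Hopf–Galois extension. The set Aut_H(A) of unital algebra endomorphisms F of A that are right H-comodule maps and restrict to the identity on B is a group under composition; moreover the inverse of F is given by F⁻¹(a) = a₍₀₎ F(a₍₁₎⁽¹⁾) a₍₁₎⁽²⁾. -/

import Mathlib

open TensorProduct

noncomputable section

variable {k A H : Type*} [Field k] [Ring A] [Algebra k A]
  [Ring H] [HopfAlgebra k H]

/-- The set of coinvariant elements of `A` for the coaction `δ`. -/
def coinv (δ : A →ₐ[k] A ⊗[k] H) : Set A := {a | δ a = a ⊗ₜ[k] 1}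

/-- The submodule of `A ⊗[k] A` generated by the `B`-balancing relations, where
`B = coinv δ` is the subalgebra of coinvariants. -/
def relSub (δ : A →ₐ[k] A ⊗[k] H) : Submodule k (A ⊗[k] A) :=
  Submodule.span k
    {z | ∃ x y b, b ∈ coinv δ ∧ z = (x * b) ⊗ₜ[k] y - x ⊗ₜ[k] (b * y)}

/-- The balanced tensor product `A ⊗_B A` over the coinvariant subalgebra. -/
abbrev QB (δ : A →ₐ[k] A ⊗[k] H) := (A ⊗[k] A) ⧸ relSub δ

/-- The canonical Galois map `A ⊗ A → A ⊗ H`, `a' ⊗ a ↦ a' a₍₀₎ ⊗ a₍₁₎`,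
before descending to `A ⊗_B A`. -/
def canMap (δ : A →ₐ[k] A ⊗[k] H) : A ⊗[k] A →ₗ[k] A ⊗[k] H :=
  (LinearMap.rTensor H (LinearMap.mul' k A)) ∘ₗ
    ((TensorProduct.assoc k A A H).symm.toLinearMap) ∘ₗ
      (LinearMap.lTensor A δ.toLinearMap)

/-- `δ` is a counital and coassociative coaction (so `A` is an `H`-comodule algebra). -/
def IsCoaction (δ : A →ₐ[k] A ⊗[k] H) : Prop :=
  (∀ a : A,
    (TensorProduct.rid k A)
      ((LinearMap.lTensor A (Coalgebra.counit (R := k) (A := H))) (δ a)) = a) ∧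
  (∀ a : A,
    (TensorProduct.assoc k A H H)
      ((LinearMap.rTensor H δ.toLinearMap) (δ a)) =
    (LinearMap.lTensor A (Coalgebra.comul (R := k) (A := H))) (δ a))

/-- The translation map `τ = χ⁻¹(1 ⊗ -) : H → A ⊗_B A`. -/
def tauMap (δ : A →ₐ[k] A ⊗[k] H) (χ : QB δ ≃ₗ[k] A ⊗[k] H) :
    H →ₗ[k] QB δ :=
  χ.symm.toLinearMap ∘ₗ (TensorProduct.mk k A H 1)


/-- The `B`-balancing relations in `A ⊗[k] M`, for a left action `ρ` of the
coinvariant subalgebra on a `k`-module `M`. -/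
def relSubM (δ : A →ₐ[k] A ⊗[k] H) (M : Type*) [AddCommGroup M] [Module k M]
    (ρ : A → M →ₗ[k] M) : Submodule k (A ⊗[k] M) :=
  Submodule.span k
    {z | ∃ x m b, b ∈ coinv δ ∧ z = (x * b) ⊗ₜ[k] m - x ⊗ₜ[k] (ρ b m)}

/-- `A` is faithfully flat as a right module over the coinvariant subalgebra
`B = coinv δ`:  a map `f` of left `B`-modules is injective if and only if
`id_A ⊗_B f` is injective. -/
def FaithfullyFlatCoinv (δ : A →ₐ[k] A ⊗[k] H) : Prop :=
  ∀ (M N : Type) [AddCommGroup M] [Module k M] [AddCommGroup N] [Module k N]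
    (ρM : A → M →ₗ[k] M) (ρN : A → N →ₗ[k] N) (f : M →ₗ[k] N)
    (hf : ∀ b ∈ coinv δ, ∀ m, f (ρM b m) = ρN b (f m)),
    Function.Injective f ↔
      Function.Injective (Submodule.mapQ (relSubM δ M ρM) (relSubM δ N ρN)
        (LinearMap.lTensor A f) (by
          rw [relSubM, Submodule.span_le]
          rintro z ⟨x, m, b, hb, rfl⟩
          simp only [SetLike.mem_coe, Submodule.mem_comap, map_sub,
            LinearMap.lTensor_tmul]
          rw [hf b hb m]
          exact Submodule.subset_span ⟨x, f m, b, hb, rfl⟩))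

/-- `F` is a gauge transformation: a unital algebra endomorphism of `A` that is
`H`-equivariant and restricts to the identity on the coinvariant subalgebra. -/
def IsGauge (δ : A →ₐ[k] A ⊗[k] H) (F : A →ₐ[k] A) : Prop :=
  (∀ a : A, δ (F a) = (LinearMap.rTensor H F.toLinearMap) (δ a)) ∧
  (∀ b ∈ coinv δ, F b = b)

set_option synthInstance.maxHeartbeats 1000000
set_option maxHeartbeats 1600000

namespace GaugeAux

variable {k A H : Type*} [Field k] [Ring A] [Algebra k A]
  [Ring H] [HopfAlgebra k H]

local notation "εH" => Coalgebra.counit (R := k) (A := H)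
local notation "ΔH" => Coalgebra.comul (R := k) (A := H)
local notation "SH" => HopfAlgebra.antipode (R := k) (A := H)

variable (δ : A →ₐ[k] A ⊗[k] H)

/-- quotient map `A ⊗ A → A ⊗_B A`. -/
abbrev mkk : A ⊗[k] A →ₗ[k] QB δ := (relSub δ).mkQ

theorem mk_rel {b : A} (hb : b ∈ coinv δ) (x y : A) :
    (Submodule.Quotient.mk ((x * b) ⊗ₜ[k] y) : QB δ) =
      Submodule.Quotient.mk (x ⊗ₜ[k] (b * y)) := by
  rw [Submodule.Quotient.eq]
  exact Submodule.subset_span ⟨x, y, b, hb, rfl⟩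

theorem relSub_le_ker {N : Type*} [AddCommGroup N] [Module k N] (f : A ⊗[k] A →ₗ[k] N)
    (hf : ∀ (x y b : A), b ∈ coinv δ → f ((x * b) ⊗ₜ[k] y) = f (x ⊗ₜ[k] (b * y))) :
    relSub δ ≤ LinearMap.ker f := by
  rw [relSub, Submodule.span_le]
  rintro z ⟨x, y, b, hb, rfl⟩
  simp only [SetLike.mem_coe, LinearMap.mem_ker, map_sub, sub_eq_zero]
  exact hf x y b hb

theorem qext {N : Type*} [AddCommGroup N] [Module k N] {f g : QB δ →ₗ[k] N}
    (h : ∀ x y : A, f (Submodule.Quotient.mk (x ⊗ₜ[k] y)) =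
      g (Submodule.Quotient.mk (x ⊗ₜ[k] y))) : f = g := by
  apply Submodule.linearMap_qext
  apply TensorProduct.ext'
  intro x y
  simpa [Submodule.mkQ_apply] using h x y

theorem aux_mul_assocA (x : A) (t : A ⊗[k] H) :
    (LinearMap.mul' k A).rTensor H ((TensorProduct.assoc k A A H).symm (x ⊗ₜ[k] t)) =
      (LinearMap.mulLeft k x).rTensor H t := by
  induction t using TensorProduct.induction_on with
  | zero => simp only [tmul_zero, map_zero]
  | tmul a h =>
    simp only [TensorProduct.assoc_symm_tmul, LinearMap.rTensor_tmul,
      LinearMap.mul'_apply, LinearMap.mulLeft_apply]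
  | add t₁ t₂ h₁ h₂ => simp only [tmul_add, map_add, h₁, h₂]

theorem can_tmul (x y : A) :
    canMap δ (x ⊗ₜ[k] y) = (LinearMap.mulLeft k x).rTensor H (δ y) := by
  rw [canMap]
  simp only [LinearMap.coe_comp, Function.comp_apply, LinearEquiv.coe_coe,
    LinearMap.lTensor_tmul, AlgHom.toLinearMap_apply]
  exact aux_mul_assocA x (δ y)

/-- descended multiplication `A ⊗_B A → A`. -/
def muQ : QB δ →ₗ[k] A :=
  Submodule.liftQ _ (LinearMap.mul' k A)
    (relSub_le_ker δ _ (fun x y b _ => by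
      simp [LinearMap.mul'_apply, mul_assoc]))

theorem muQ_mk (x y : A) :
    muQ δ (Submodule.Quotient.mk (x ⊗ₜ[k] y)) = x * y := by
  simp [muQ, Submodule.liftQ_apply, LinearMap.mul'_apply]

/-- left multiplication on the first tensor leg of `A ⊗_B A`. -/
def Lmul (a : A) : QB δ →ₗ[k] QB δ :=
  Submodule.liftQ _ (mkk δ ∘ₗ (LinearMap.mulLeft k a).rTensor A)
    (relSub_le_ker δ _ (fun x y b hb => by
      simp only [LinearMap.comp_apply, LinearMap.rTensor_tmul, LinearMap.mulLeft_apply,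
        Submodule.mkQ_apply]
      rw [← mul_assoc]
      exact mk_rel δ hb (a * x) y))

theorem Lmul_mk (a x y : A) :
    Lmul δ a (Submodule.Quotient.mk (x ⊗ₜ[k] y)) =
      Submodule.Quotient.mk ((a * x) ⊗ₜ[k] y) := by
  simp [Lmul, Submodule.liftQ_apply, Submodule.mkQ_apply]

variable (F : A →ₐ[k] A)

/-- `F` applied on the first tensor leg of `A ⊗_B A`. -/
def Ftil (hFB : ∀ b ∈ coinv δ, F b = b) : QB δ →ₗ[k] QB δ :=
  Submodule.liftQ _ (mkk δ ∘ₗ F.toLinearMap.rTensor A)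
    (relSub_le_ker δ _ (fun x y b hb => by
      simp only [LinearMap.comp_apply, LinearMap.rTensor_tmul, AlgHom.toLinearMap_apply,
        map_mul, hFB b hb, Submodule.mkQ_apply]
      exact mk_rel δ hb (F x) y))

theorem Ftil_mk (hFB) (x y : A) :
    Ftil δ F hFB (Submodule.Quotient.mk (x ⊗ₜ[k] y)) =
      Submodule.Quotient.mk (F x ⊗ₜ[k] y) := by
  simp [Ftil, Submodule.liftQ_apply, Submodule.mkQ_apply]

/-- `F` applied on the second tensor leg of `A ⊗_B A`. -/
def Gtil (hFB : ∀ b ∈ coinv δ, F b = b) : QB δ →ₗ[k] QB δ :=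
  Submodule.liftQ _ (mkk δ ∘ₗ F.toLinearMap.lTensor A)
    (relSub_le_ker δ _ (fun x y b hb => by
      simp only [LinearMap.comp_apply, LinearMap.lTensor_tmul, AlgHom.toLinearMap_apply,
        map_mul, hFB b hb, Submodule.mkQ_apply]
      exact mk_rel δ hb x (F y)))

theorem Gtil_mk (hFB) (x y : A) :
    Gtil δ F hFB (Submodule.Quotient.mk (x ⊗ₜ[k] y)) =
      Submodule.Quotient.mk (x ⊗ₜ[k] F y) := by
  simp [Gtil, Submodule.liftQ_apply, Submodule.mkQ_apply]

theorem delta_coinv_left {b : A} (hb : b ∈ coinv δ) (y : A) :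
    δ (b * y) = (b ⊗ₜ[k] (1 : H)) * δ y := by
  rw [map_mul]
  congr 1

theorem delta_coinv_right {b : A} (hb : b ∈ coinv δ) (x : A) :
    δ (x * b) = δ x * (b ⊗ₜ[k] (1 : H)) := by
  rw [map_mul]
  congr 1

theorem cobar_aux {b : A} (hb : b ∈ coinv δ) (x : A) (t : A ⊗[k] H) :
    (mkk δ).rTensor H ((TensorProduct.assoc k A A H).symm ((x * b) ⊗ₜ[k] t)) =
    (mkk δ).rTensor H ((TensorProduct.assoc k A A H).symm (x ⊗ₜ[k] ((b ⊗ₜ[k] (1:H)) * t))) := by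
  induction t using TensorProduct.induction_on with
  | zero => simp only [tmul_zero, mul_zero, map_zero]
  | tmul c h =>
    simp only [Algebra.TensorProduct.tmul_mul_tmul, one_mul,
      TensorProduct.assoc_symm_tmul, LinearMap.rTensor_tmul, Submodule.mkQ_apply]
    rw [mk_rel δ hb x c]
  | add t₁ t₂ h₁ h₂ => simp only [mul_add, tmul_add, map_add, h₁, h₂]

/-- coaction on the second tensor leg of `A ⊗_B A`. -/
def cobar : QB δ →ₗ[k] (QB δ) ⊗[k] H :=
  Submodule.liftQ _
    ((mkk δ).rTensor H ∘ₗ (TensorProduct.assoc k A A H).symm.toLinearMap ∘ₗ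
      δ.toLinearMap.lTensor A)
    (relSub_le_ker δ _ (fun x y b hb => by
      simp only [LinearMap.comp_apply, LinearMap.lTensor_tmul, LinearEquiv.coe_coe,
        AlgHom.toLinearMap_apply]
      rw [delta_coinv_left δ hb y]
      exact cobar_aux δ hb x (δ y)))

theorem cobar_mk (x y : A) :
    cobar δ (Submodule.Quotient.mk (x ⊗ₜ[k] y)) =
      (mkk δ).rTensor H ((TensorProduct.assoc k A A H).symm (x ⊗ₜ[k] δ y)) := by
  simp [cobar, Submodule.liftQ_apply]

/-- rearrangement `(A ⊗ H) ⊗ A → (A ⊗ A) ⊗ H`. -/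
def Pfree : (A ⊗[k] H) ⊗[k] A →ₗ[k] (A ⊗[k] A) ⊗[k] H :=
  (TensorProduct.assoc k A A H).symm.toLinearMap ∘ₗ
    (TensorProduct.comm k H A).toLinearMap.lTensor A ∘ₗ
      (TensorProduct.assoc k A H A).toLinearMap

theorem Pfree_tmul (a c : A) (g : H) :
    Pfree (k := k) ((a ⊗ₜ[k] g) ⊗ₜ[k] c) = (a ⊗ₜ[k] c) ⊗ₜ[k] g := by
  simp [Pfree, TensorProduct.assoc_tmul, TensorProduct.assoc_symm_tmul]

theorem cobar1_aux {b : A} (hb : b ∈ coinv δ) (y : A) (s : A ⊗[k] H) :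
    (mkk δ).rTensor H (Pfree ((s * (b ⊗ₜ[k] (1:H))) ⊗ₜ[k] y)) =
    (mkk δ).rTensor H (Pfree (s ⊗ₜ[k] (b * y))) := by
  induction s using TensorProduct.induction_on with
  | zero => simp only [zero_mul, zero_tmul, map_zero]
  | tmul a g =>
    simp only [Algebra.TensorProduct.tmul_mul_tmul, mul_one, Pfree_tmul,
      LinearMap.rTensor_tmul, Submodule.mkQ_apply]
    rw [mk_rel δ hb a y]
  | add s₁ s₂ h₁ h₂ => simp only [add_mul, add_tmul, map_add, h₁, h₂]

/-- coaction on the first tensor leg of `A ⊗_B A`. -/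
def cobar1 : QB δ →ₗ[k] (QB δ) ⊗[k] H :=
  Submodule.liftQ _
    ((mkk δ).rTensor H ∘ₗ Pfree ∘ₗ δ.toLinearMap.rTensor A)
    (relSub_le_ker δ _ (fun x y b hb => by
      simp only [LinearMap.comp_apply, LinearMap.rTensor_tmul, AlgHom.toLinearMap_apply]
      rw [delta_coinv_right δ hb x]
      exact cobar1_aux δ hb y (δ x)))

theorem cobar1_mk (x y : A) :
    cobar1 δ (Submodule.Quotient.mk (x ⊗ₜ[k] y)) =
      (mkk δ).rTensor H (Pfree (δ x ⊗ₜ[k] y)) := by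
  simp [cobar1, Submodule.liftQ_apply]

/-- the map `x ⊗_B y ↦ x₍₀₎ y ⊗ x₍₁₎`. -/
def V : QB δ →ₗ[k] A ⊗[k] H := (muQ δ).rTensor H ∘ₗ cobar1 δ

theorem V_mk (x y : A) :
    V δ (Submodule.Quotient.mk (x ⊗ₜ[k] y)) =
      ((LinearMap.mul k A).flip y).rTensor H (δ x) := by
  rw [V, LinearMap.comp_apply, cobar1_mk]
  generalize δ x = s
  induction s using TensorProduct.induction_on with
  | zero => simp only [zero_tmul, map_zero]
  | tmul a g =>
    simp only [Pfree_tmul, LinearMap.rTensor_tmul, Submodule.mkQ_apply, muQ_mk,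
      LinearMap.flip_apply, LinearMap.mul_apply']
  | add s₁ s₂ h₁ h₂ => simp only [add_tmul, map_add, h₁, h₂]

end GaugeAux

namespace GaugeAux

section Chi

variable {k A H : Type*} [Field k] [Ring A] [Algebra k A]
  [Ring H] [HopfAlgebra k H]

local notation "εH" => Coalgebra.counit (R := k) (A := H)
local notation "ΔH" => Coalgebra.comul (R := k) (A := H)
local notation "SH" => HopfAlgebra.antipode (R := k) (A := H)

variable (δ : A →ₐ[k] A ⊗[k] H) (χ : QB δ ≃ₗ[k] A ⊗[k] H)


theorem chi_mkk (hχ : ∀ z : A ⊗[k] A, χ (Submodule.Quotient.mk z) = canMap δ z) : χ.toLinearMap ∘ₗ mkk δ = canMap δ := by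
  apply LinearMap.ext
  intro w
  simpa [Submodule.mkQ_apply] using hχ w

theorem chi_tau (h : H) : χ (tauMap δ χ h) = (1 : A) ⊗ₜ[k] h := by
  simp [tauMap, TensorProduct.mk_apply]

theorem chi_comp_tau : χ.toLinearMap ∘ₗ tauMap δ χ = TensorProduct.mk k A H 1 := by
  apply LinearMap.ext
  intro h
  simpa using chi_tau δ χ h

theorem chi_Lmul (hχ : ∀ z : A ⊗[k] A, χ (Submodule.Quotient.mk z) = canMap δ z) (a : A) :
    χ.toLinearMap ∘ₗ Lmul δ a = (LinearMap.mulLeft k a).rTensor H ∘ₗ χ.toLinearMap := by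
  apply qext
  intro x y
  simp only [LinearMap.comp_apply, LinearEquiv.coe_coe, Lmul_mk, hχ, can_tmul,
    LinearMap.mulLeft_mul]
  rw [LinearMap.rTensor_comp, LinearMap.comp_apply]

theorem chi_symm_tmul (hχ : ∀ z : A ⊗[k] A, χ (Submodule.Quotient.mk z) = canMap δ z) (a : A) (h : H) :
    χ.symm (a ⊗ₜ[k] h) = Lmul δ a (tauMap δ χ h) := by
  rw [LinearEquiv.symm_apply_eq]
  have := LinearMap.congr_fun (chi_Lmul δ χ hχ a) (tauMap δ χ h)
  simp only [LinearMap.comp_apply, LinearEquiv.coe_coe] at this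
  rw [this, chi_tau δ χ h, LinearMap.rTensor_tmul, LinearMap.mulLeft_apply, mul_one]

theorem mk_one (hχ : ∀ z : A ⊗[k] A, χ (Submodule.Quotient.mk z) = canMap δ z) (a : A) :
    χ.symm (δ a) = (Submodule.Quotient.mk ((1:A) ⊗ₜ[k] a) : QB δ) := by
  rw [LinearEquiv.symm_apply_eq, hχ, can_tmul, LinearMap.mulLeft_one, LinearMap.rTensor_id]
  rfl

/-- `a ⊗ h ↦ ε(h) • a`. -/
def E2 : A ⊗[k] H →ₗ[k] A :=
  (TensorProduct.rid k A).toLinearMap ∘ₗ LinearMap.lTensor A (εH)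

theorem E2_tmul (a : A) (h : H) : E2 (k := k) (a ⊗ₜ[k] h) = εH h • a := by
  simp [E2, TensorProduct.rid_tmul]

theorem E2_mulLeft (x : A) (t : A ⊗[k] H) :
    E2 (k := k) ((LinearMap.mulLeft k x).rTensor H t) = x * E2 (k := k) t := by
  induction t using TensorProduct.induction_on with
  | zero => simp only [map_zero, mul_zero]
  | tmul a h => simp only [LinearMap.rTensor_tmul, LinearMap.mulLeft_apply, E2_tmul,
      mul_smul_comm]
  | add t₁ t₂ h₁ h₂ => simp only [map_add, mul_add, h₁, h₂]

theorem E2_delta (hδ : IsCoaction δ) (a : A) : E2 (k := k) (δ a) = a := hδ.1 a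

theorem muQ_eq (hχ : ∀ z : A ⊗[k] A, χ (Submodule.Quotient.mk z) = canMap δ z) (hδ : IsCoaction δ) : muQ δ = E2 ∘ₗ χ.toLinearMap := by
  apply qext
  intro x y
  simp only [muQ_mk, LinearMap.comp_apply, LinearEquiv.coe_coe, hχ, can_tmul, E2_mulLeft,
    E2_delta δ hδ]

theorem muQ_tau (hχ : ∀ z : A ⊗[k] A, χ (Submodule.Quotient.mk z) = canMap δ z) (hδ : IsCoaction δ) (h : H) : muQ δ (tauMap δ χ h) = εH h • (1 : A) := by
  rw [muQ_eq δ χ hχ hδ]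
  simp only [LinearMap.comp_apply, LinearEquiv.coe_coe, chi_tau δ χ, E2_tmul]

/-- `a ⊗ h ↦ Σ (a ⊗ h₁) ⊗ h₂`. -/
def Theta : A ⊗[k] H →ₗ[k] (A ⊗[k] H) ⊗[k] H :=
  (TensorProduct.assoc k A H H).symm.toLinearMap ∘ₗ LinearMap.lTensor A (ΔH)

theorem coassoc_delta (hδ : IsCoaction δ) (a : A) :
    δ.toLinearMap.rTensor H (δ a) = Theta (k := k) (δ a) := by
  rw [Theta]
  simp only [LinearMap.comp_apply, LinearEquiv.coe_coe]
  rw [← hδ.2 a, LinearEquiv.symm_apply_apply]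

theorem assoc_one (u : H ⊗[k] H) :
    (TensorProduct.assoc k A H H).symm ((1:A) ⊗ₜ[k] u) =
      (TensorProduct.mk k A H 1).rTensor H u := by
  induction u using TensorProduct.induction_on with
  | zero => simp only [tmul_zero, map_zero]
  | tmul g g' => simp only [TensorProduct.assoc_symm_tmul, LinearMap.rTensor_tmul,
      TensorProduct.mk_apply]
  | add u₁ u₂ h₁ h₂ => simp only [tmul_add, map_add, h₁, h₂]

theorem hD1 (x : A) (t : A ⊗[k] H) :
    (canMap δ).rTensor H ((TensorProduct.assoc k A A H).symm (x ⊗ₜ[k] t)) =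
      ((LinearMap.mulLeft k x).rTensor H).rTensor H (δ.toLinearMap.rTensor H t) := by
  induction t using TensorProduct.induction_on with
  | zero => simp only [tmul_zero, map_zero]
  | tmul c h => simp only [TensorProduct.assoc_symm_tmul, LinearMap.rTensor_tmul,
      can_tmul, AlgHom.toLinearMap_apply]
  | add t₁ t₂ h₁ h₂ => simp only [tmul_add, map_add, h₁, h₂]

theorem hD2' (x a : A) (u : H ⊗[k] H) :
    (TensorProduct.assoc k A H H).symm ((x * a) ⊗ₜ[k] u) =
      ((LinearMap.mulLeft k x).rTensor H).rTensor H
        ((TensorProduct.assoc k A H H).symm (a ⊗ₜ[k] u)) := by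
  induction u using TensorProduct.induction_on with
  | zero => simp only [tmul_zero, map_zero]
  | tmul g g' => simp only [TensorProduct.assoc_symm_tmul, LinearMap.rTensor_tmul,
      LinearMap.mulLeft_apply]
  | add u₁ u₂ h₁ h₂ => simp only [tmul_add, map_add, h₁, h₂]

theorem hD2 (x : A) (t : A ⊗[k] H) :
    Theta (k := k) ((LinearMap.mulLeft k x).rTensor H t) =
      ((LinearMap.mulLeft k x).rTensor H).rTensor H (Theta (k := k) t) := by
  induction t using TensorProduct.induction_on with
  | zero => simp only [map_zero]
  | tmul a h =>
    simp only [Theta, LinearMap.comp_apply, LinearMap.rTensor_tmul, LinearMap.mulLeft_apply,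
      LinearMap.lTensor_tmul, LinearEquiv.coe_coe]
    exact hD2' x a (ΔH h)
  | add t₁ t₂ h₁ h₂ => simp only [map_add, h₁, h₂]

theorem chi_cobar (hχ : ∀ z : A ⊗[k] A, χ (Submodule.Quotient.mk z) = canMap δ z) (hδ : IsCoaction δ) :
    χ.toLinearMap.rTensor H ∘ₗ cobar δ = Theta (k := k) ∘ₗ χ.toLinearMap := by
  apply qext
  intro x y
  simp only [LinearMap.comp_apply, LinearEquiv.coe_coe, cobar_mk, hχ, can_tmul]
  rw [← LinearMap.comp_apply (χ.toLinearMap.rTensor H) ((mkk δ).rTensor H),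
    ← LinearMap.rTensor_comp, chi_mkk δ χ hχ, hD1, coassoc_delta δ hδ, ← hD2]

theorem rTensor_chi_inj : Function.Injective (χ.toLinearMap.rTensor H) :=
  Module.Flat.rTensor_preserves_injective_linearMap _ χ.injective

theorem cobar_tau (hχ : ∀ z : A ⊗[k] A, χ (Submodule.Quotient.mk z) = canMap δ z) (hδ : IsCoaction δ) (h : H) :
    cobar δ (tauMap δ χ h) = (tauMap δ χ).rTensor H (ΔH h) := by
  apply rTensor_chi_inj δ χ
  have h1 := LinearMap.congr_fun (chi_cobar δ χ hχ hδ) (tauMap δ χ h)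
  simp only [LinearMap.comp_apply, LinearEquiv.coe_coe] at h1
  rw [h1, chi_tau δ χ h]
  rw [← LinearMap.comp_apply (χ.toLinearMap.rTensor H) ((tauMap δ χ).rTensor H),
    ← LinearMap.rTensor_comp, chi_comp_tau δ χ]
  rw [Theta]
  simp only [LinearMap.comp_apply, LinearEquiv.coe_coe, LinearMap.lTensor_tmul]
  exact assoc_one (ΔH h)

end Chi

section Conv

variable {k H : Type*} [Field k] [Ring H] [HopfAlgebra k H]

local notation "εH" => Coalgebra.counit (R := k) (A := H)
local notation "ΔH" => Coalgebra.comul (R := k) (A := H)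

variable (C : Type*) [Ring C] [Algebra k C]

/-- convolution product on `Hom(H, C)`. -/
def conv (f g : H →ₗ[k] C) : H →ₗ[k] C :=
  LinearMap.mul' k C ∘ₗ TensorProduct.map f g ∘ₗ (ΔH)

/-- convolution unit. -/
def cunit : H →ₗ[k] C := Algebra.linearMap k C ∘ₗ (εH)

theorem conv_apply (f g : H →ₗ[k] C) (h : H) :
    conv C f g h = LinearMap.mul' k C (TensorProduct.map f g (ΔH h)) := rfl

theorem cunit_apply (h : H) : cunit C (k := k) (H := H) h = εH h • (1 : C) := by
  simp [cunit, Algebra.algebraMap_eq_smul_one]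

theorem conv_assoc (f g e : H →ₗ[k] C) :
    conv C (conv C f g) e = conv C f (conv C g e) := by
  have key : ∀ w : H ⊗[k] (H ⊗[k] H),
      LinearMap.mul' k C (TensorProduct.map (LinearMap.mul' k C ∘ₗ TensorProduct.map f g) e
        ((TensorProduct.assoc k H H H).symm w)) =
      LinearMap.mul' k C (TensorProduct.map f (LinearMap.mul' k C ∘ₗ TensorProduct.map g e) w) := by
    intro w
    induction w using TensorProduct.induction_on with
    | zero => simp only [map_zero]
    | tmul x u =>
      induction u using TensorProduct.induction_on with
      | zero => simp only [tmul_zero, map_zero]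
      | tmul y z =>
        simp only [TensorProduct.assoc_symm_tmul, TensorProduct.map_tmul,
          LinearMap.comp_apply, LinearMap.mul'_apply, mul_assoc]
      | add u₁ u₂ hu₁ hu₂ => simp only [tmul_add, map_add, hu₁, hu₂]
    | add w₁ w₂ h₁ h₂ => simp only [map_add, h₁, h₂]
  apply LinearMap.ext
  intro h
  have e1 : TensorProduct.map (conv C f g) e =
      TensorProduct.map (LinearMap.mul' k C ∘ₗ TensorProduct.map f g) e ∘ₗ (ΔH).rTensor H := by
    have h0 := TensorProduct.map_comp (LinearMap.mul' k C ∘ₗ TensorProduct.map f g) e (ΔH)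
      (LinearMap.id)
    rw [LinearMap.comp_id, LinearMap.comp_assoc] at h0
    rw [conv]
    exact h0
  have e2 : TensorProduct.map f (conv C g e) =
      TensorProduct.map f (LinearMap.mul' k C ∘ₗ TensorProduct.map g e) ∘ₗ (ΔH).lTensor H := by
    have h0 := TensorProduct.map_comp f
      (LinearMap.mul' k C ∘ₗ TensorProduct.map g e) (LinearMap.id) (ΔH)
    rw [LinearMap.comp_id, LinearMap.comp_assoc] at h0
    rw [conv]
    exact h0
  rw [conv_apply, conv_apply, e1, e2]
  simp only [LinearMap.comp_apply]
  rw [show (ΔH).rTensor H (ΔH h) =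
      (TensorProduct.assoc k H H H).symm ((ΔH).lTensor H (ΔH h)) from
    (Coalgebra.coassoc_symm_apply h).symm]
  exact key ((ΔH).lTensor H (ΔH h))

theorem conv_cunit_right (f : H →ₗ[k] C) : conv C f (cunit C) = f := by
  apply LinearMap.ext
  intro h
  rw [conv_apply, cunit]
  have : TensorProduct.map f (Algebra.linearMap k C ∘ₗ (εH)) =
      TensorProduct.map f (Algebra.linearMap k C) ∘ₗ (εH).lTensor H := by
    have h0 := TensorProduct.map_comp f (Algebra.linearMap k C) (LinearMap.id) (εH)
    rw [LinearMap.comp_id] at h0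
    exact h0
  rw [this, LinearMap.comp_apply, Coalgebra.lTensor_counit_comul]
  simp [Algebra.algebraMap_eq_smul_one]

theorem conv_cunit_left (f : H →ₗ[k] C) : conv C (cunit C) f = f := by
  apply LinearMap.ext
  intro h
  rw [conv_apply, cunit]
  have : TensorProduct.map (Algebra.linearMap k C ∘ₗ (εH)) f =
      TensorProduct.map (Algebra.linearMap k C) f ∘ₗ (εH).rTensor H := by
    have h0 := TensorProduct.map_comp (Algebra.linearMap k C) f (εH) (LinearMap.id)
    rw [LinearMap.comp_id] at h0
    exact h0
  rw [this, LinearMap.comp_apply, Coalgebra.rTensor_counit_comul]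
  simp [Algebra.algebraMap_eq_smul_one]

theorem conv_cancel (u s i : H →ₗ[k] C) (h1 : conv C u i = cunit C)
    (h2 : conv C i s = cunit C) : u = s := by
  have h3 := conv_assoc C u i s
  rw [h1, h2, conv_cunit_left, conv_cunit_right] at h3
  exact h3.symm

end Conv

end GaugeAux

namespace GaugeAux

section Ids

variable {k A H : Type*} [Field k] [Ring A] [Algebra k A]
  [Ring H] [HopfAlgebra k H]

local notation "εH" => Coalgebra.counit (R := k) (A := H)
local notation "ΔH" => Coalgebra.comul (R := k) (A := H)
local notation "SH" => HopfAlgebra.antipode (R := k) (A := H)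

variable (δ : A →ₐ[k] A ⊗[k] H) (χ : QB δ ≃ₗ[k] A ⊗[k] H)

/-- `h ↦ 1 ⊗ h`. -/
def iC : H →ₗ[k] A ⊗[k] H := TensorProduct.mk k A H 1

/-- `a ↦ a ⊗ 1`. -/
def inlA : A →ₗ[k] A ⊗[k] H := (TensorProduct.mk k A H).flip 1

theorem iC_apply (h : H) : iC (k := k) (A := A) h = (1 : A) ⊗ₜ[k] h := rfl

theorem inlA_apply (a : A) : inlA (k := k) (H := H) a = a ⊗ₜ[k] (1 : H) := rfl

theorem Kaux (W : QB δ →ₗ[k] A ⊗[k] H) (G : A →ₗ[k] A)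
    (hW : ∀ x y : A, W (Submodule.Quotient.mk (x ⊗ₜ[k] y)) =
      (((LinearMap.mul k A).flip y) ∘ₗ G).rTensor H (δ x))
    (x : A) (t : A ⊗[k] H) :
    LinearMap.mul' k (A ⊗[k] H) (TensorProduct.map W iC
      ((mkk δ).rTensor H ((TensorProduct.assoc k A A H).symm (x ⊗ₜ[k] t)))) =
    (G.rTensor H (δ x)) * t := by
  induction t using TensorProduct.induction_on with
  | zero => simp only [tmul_zero, map_zero, mul_zero]
  | tmul c h =>
    simp only [TensorProduct.assoc_symm_tmul, LinearMap.rTensor_tmul, Submodule.mkQ_apply,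
      TensorProduct.map_tmul, LinearMap.mul'_apply, hW x c]
    generalize δ x = s
    induction s using TensorProduct.induction_on with
    | zero => simp only [map_zero, zero_mul]
    | tmul a g =>
      simp only [LinearMap.rTensor_tmul, LinearMap.comp_apply, LinearMap.flip_apply,
        LinearMap.mul_apply', iC_apply, Algebra.TensorProduct.tmul_mul_tmul, mul_one, one_mul]
    | add s₁ s₂ h₁ h₂ => simp only [map_add, add_mul, h₁, h₂]
  | add t₁ t₂ h₁ h₂ => simp only [tmul_add, map_add, mul_add, h₁, h₂]

theorem K0_cobar :
    LinearMap.mul' k (A ⊗[k] H) ∘ₗ TensorProduct.map (V δ) iC ∘ₗ cobar δ =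
      δ.toLinearMap ∘ₗ muQ δ := by
  apply qext
  intro x y
  simp only [LinearMap.comp_apply, cobar_mk, muQ_mk, AlgHom.toLinearMap_apply]
  have hW : ∀ x y : A, V δ (Submodule.Quotient.mk (x ⊗ₜ[k] y)) =
      (((LinearMap.mul k A).flip y) ∘ₗ LinearMap.id).rTensor H (δ x) := by
    intro x y
    rw [LinearMap.comp_id]
    exact V_mk δ x y
  rw [Kaux δ (V δ) LinearMap.id hW x (δ y), LinearMap.rTensor_id]
  simp only [LinearMap.id_coe, id_eq, map_mul]

theorem conv_V_iC (hχ : ∀ z : A ⊗[k] A, χ (Submodule.Quotient.mk z) = canMap δ z)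
    (hδ : IsCoaction δ) :
    conv (A ⊗[k] H) (V δ ∘ₗ tauMap δ χ) iC = cunit (A ⊗[k] H) := by
  apply LinearMap.ext
  intro h
  rw [conv_apply]
  have e1 : TensorProduct.map (V δ ∘ₗ tauMap δ χ) (iC (k := k) (A := A)) =
      TensorProduct.map (V δ) iC ∘ₗ (tauMap δ χ).rTensor H := by
    have h0 := TensorProduct.map_comp (V δ) (iC (k := k) (A := A)) (tauMap δ χ) (LinearMap.id : H →ₗ[k] H)
    rw [LinearMap.comp_id] at h0
    exact h0
  rw [e1, LinearMap.comp_apply, ← cobar_tau δ χ hχ hδ]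
  have h2 := LinearMap.congr_fun (K0_cobar δ) (tauMap δ χ h)
  simp only [LinearMap.comp_apply] at h2
  rw [h2, muQ_tau δ χ hχ hδ]
  simp only [map_smul, map_one, AlgHom.toLinearMap_apply, cunit_apply]

theorem iC_mul (w : H ⊗[k] H) :
    LinearMap.mul' k (A ⊗[k] H) (TensorProduct.map (iC (k := k) (A := A)) iC w) =
      (1 : A) ⊗ₜ[k] (LinearMap.mul' k H w) := by
  induction w using TensorProduct.induction_on with
  | zero => simp only [map_zero, tmul_zero]
  | tmul g g' =>
    simp only [TensorProduct.map_tmul, iC_apply, LinearMap.mul'_apply,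
      Algebra.TensorProduct.tmul_mul_tmul, one_mul]
  | add w₁ w₂ h₁ h₂ => simp only [map_add, tmul_add, h₁, h₂]

theorem conv_iC_sC :
    conv (A ⊗[k] H) iC (iC ∘ₗ SH) = cunit (A ⊗[k] H) := by
  apply LinearMap.ext
  intro h
  rw [conv_apply]
  have e1 : TensorProduct.map (iC (k := k) (A := A)) ((iC (k := k) (A := A)) ∘ₗ SH) =
      TensorProduct.map (iC (k := k) (A := A)) (iC (k := k) (A := A)) ∘ₗ
        LinearMap.lTensor H (SH) := by
    have h0 := TensorProduct.map_comp (iC (k := k) (A := A))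
      (iC (k := k) (A := A)) (LinearMap.id : H →ₗ[k] H) SH
    rw [LinearMap.comp_id] at h0
    exact h0
  rw [e1, LinearMap.comp_apply, iC_mul, HopfAlgebra.mul_antipode_lTensor_comul_apply,
    cunit_apply, Algebra.algebraMap_eq_smul_one, tmul_smul, Algebra.TensorProduct.one_def]

theorem V_tau (hχ : ∀ z : A ⊗[k] A, χ (Submodule.Quotient.mk z) = canMap δ z)
    (hδ : IsCoaction δ) :
    V δ ∘ₗ tauMap δ χ = iC ∘ₗ SH :=
  conv_cancel (A ⊗[k] H) _ _ _ (conv_V_iC δ χ hχ hδ) (conv_iC_sC)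

/-- `(a ⊗ g) ⊗ (c ⊗ h) ↦ ((a c) ⊗ h) ⊗ g`. -/
def Mmap : (A ⊗[k] H) ⊗[k] (A ⊗[k] H) →ₗ[k] (A ⊗[k] H) ⊗[k] H :=
  (TensorProduct.assoc k A H H).symm.toLinearMap ∘ₗ
    TensorProduct.map (LinearMap.mul' k A) (TensorProduct.comm k H H).toLinearMap ∘ₗ
      (TensorProduct.tensorTensorTensorComm k A H A H).toLinearMap

theorem Mmap_tmul (a c : A) (g h : H) :
    Mmap (k := k) ((a ⊗ₜ[k] g) ⊗ₜ[k] (c ⊗ₜ[k] h)) = ((a * c) ⊗ₜ[k] h) ⊗ₜ[k] g := by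
  simp [Mmap, TensorProduct.tensorTensorTensorComm_tmul, TensorProduct.comm_tmul,
    TensorProduct.assoc_symm_tmul, LinearMap.mul'_apply]

/-- swap of the two `H` legs. -/
def OmM : (A ⊗[k] H) ⊗[k] H →ₗ[k] (A ⊗[k] H) ⊗[k] H :=
  (TensorProduct.assoc k A H H).symm.toLinearMap ∘ₗ
    (TensorProduct.comm k H H).toLinearMap.lTensor A ∘ₗ
      (TensorProduct.assoc k A H H).toLinearMap

theorem OmM_tmul (a : A) (g g' : H) :
    OmM (k := k) ((a ⊗ₜ[k] g) ⊗ₜ[k] g') = (a ⊗ₜ[k] g') ⊗ₜ[k] g := by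
  simp [OmM, TensorProduct.assoc_tmul, TensorProduct.comm_tmul,
    TensorProduct.assoc_symm_tmul]

theorem claimL (y : A) (s : A ⊗[k] H) :
    (canMap δ).rTensor H (Pfree (s ⊗ₜ[k] y)) = Mmap (k := k) (s ⊗ₜ[k] δ y) := by
  induction s using TensorProduct.induction_on with
  | zero => simp only [zero_tmul, map_zero]
  | tmul a g =>
    rw [Pfree_tmul, LinearMap.rTensor_tmul, can_tmul]
    generalize δ y = t
    induction t using TensorProduct.induction_on with
    | zero => simp only [map_zero, zero_tmul, tmul_zero]
    | tmul c h =>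
      simp only [Mmap_tmul, LinearMap.rTensor_tmul, LinearMap.mulLeft_apply]
    | add t₁ t₂ h₁ h₂ => simp only [map_add, tmul_add, add_tmul, h₁, h₂]
  | add s₁ s₂ h₁ h₂ => simp only [add_tmul, map_add, h₁, h₂]

theorem claimR (x : A) (t : A ⊗[k] H) :
    OmM (k := k) ((V δ).rTensor H ((mkk δ).rTensor H
        ((TensorProduct.assoc k A A H).symm (x ⊗ₜ[k] t)))) =
      Mmap (k := k) ((δ x) ⊗ₜ[k] t) := by
  induction t using TensorProduct.induction_on with
  | zero => simp only [tmul_zero, map_zero]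
  | tmul c h =>
    simp only [TensorProduct.assoc_symm_tmul, LinearMap.rTensor_tmul, Submodule.mkQ_apply,
      V_mk]
    generalize δ x = s
    induction s using TensorProduct.induction_on with
    | zero => simp only [map_zero, zero_tmul]
    | tmul a g =>
      simp only [LinearMap.rTensor_tmul, LinearMap.flip_apply, LinearMap.mul_apply',
        OmM_tmul, Mmap_tmul]
    | add s₁ s₂ h₁ h₂ => simp only [map_add, add_tmul, h₁, h₂]
  | add t₁ t₂ h₁ h₂ => simp only [tmul_add, map_add, h₁, h₂]

theorem Ol (hχ : ∀ z : A ⊗[k] A, χ (Submodule.Quotient.mk z) = canMap δ z) :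
    χ.toLinearMap.rTensor H ∘ₗ cobar1 δ =
      OmM ∘ₗ (V δ).rTensor H ∘ₗ cobar δ := by
  apply qext
  intro x y
  simp only [LinearMap.comp_apply, cobar1_mk, cobar_mk]
  rw [← LinearMap.comp_apply (χ.toLinearMap.rTensor H) ((mkk δ).rTensor H),
    ← LinearMap.rTensor_comp, chi_mkk δ χ hχ, claimL, claimR]

theorem claimS (w : H ⊗[k] H) :
    OmM (k := k) (((iC (k := k) (A := A)) ∘ₗ SH).rTensor H w) =
      TensorProduct.map (TensorProduct.mk k A H 1) SH ((TensorProduct.comm k H H) w) := by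
  induction w using TensorProduct.induction_on with
  | zero => simp only [map_zero]
  | tmul g g' =>
    simp only [LinearMap.rTensor_tmul, LinearMap.comp_apply, iC_apply, OmM_tmul,
      TensorProduct.comm_tmul, TensorProduct.map_tmul, TensorProduct.mk_apply]
  | add w₁ w₂ h₁ h₂ => simp only [map_add, h₁, h₂]

theorem cobar1_tau (hχ : ∀ z : A ⊗[k] A, χ (Submodule.Quotient.mk z) = canMap δ z)
    (hδ : IsCoaction δ) (h : H) :
    cobar1 δ (tauMap δ χ h) =
      TensorProduct.map (tauMap δ χ) SH ((TensorProduct.comm k H H) (ΔH h)) := by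
  apply rTensor_chi_inj δ χ
  have h1 := LinearMap.congr_fun (Ol δ χ hχ) (tauMap δ χ h)
  simp only [LinearMap.comp_apply] at h1
  rw [h1, cobar_tau δ χ hχ hδ]
  rw [← LinearMap.comp_apply ((V δ).rTensor H) ((tauMap δ χ).rTensor H),
    ← LinearMap.rTensor_comp, V_tau δ χ hχ hδ, claimS]
  have e1 : TensorProduct.map (χ.toLinearMap ∘ₗ tauMap δ χ) ((LinearMap.id : H →ₗ[k] H) ∘ₗ SH) =
      χ.toLinearMap.rTensor H ∘ₗ TensorProduct.map (tauMap δ χ) SH :=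
    TensorProduct.map_comp _ _ _ _
  rw [LinearMap.id_comp, chi_comp_tau δ χ] at e1
  have e2 := LinearMap.congr_fun e1 ((TensorProduct.comm k H H) (ΔH h))
  simp only [LinearMap.comp_apply] at e2
  exact e2

variable (F : A →ₐ[k] A)

theorem VFtil_mk (hF : IsGauge δ F) (x y : A) :
    V δ (Ftil δ F hF.2 (Submodule.Quotient.mk (x ⊗ₜ[k] y))) =
      (((LinearMap.mul k A).flip y) ∘ₗ F.toLinearMap).rTensor H (δ x) := by
  rw [Ftil_mk, V_mk, hF.1 x, ← LinearMap.comp_apply, ← LinearMap.rTensor_comp]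

theorem Vdec (hF : IsGauge δ F) :
    V δ ∘ₗ Ftil δ F hF.2 =
      (muQ δ ∘ₗ Ftil δ F hF.2).rTensor H ∘ₗ cobar1 δ := by
  apply qext
  intro x y
  simp only [LinearMap.comp_apply, cobar1_mk, VFtil_mk δ F hF]
  rw [← LinearMap.comp_apply ((muQ δ ∘ₗ Ftil δ F hF.2).rTensor H) ((mkk δ).rTensor H),
    ← LinearMap.rTensor_comp]
  generalize δ x = s
  induction s using TensorProduct.induction_on with
  | zero => simp only [zero_tmul, map_zero]
  | tmul a g =>
    simp only [Pfree_tmul, LinearMap.rTensor_tmul, LinearMap.comp_apply, Submodule.mkQ_apply,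
      Ftil_mk, muQ_mk, LinearMap.flip_apply, LinearMap.mul_apply', AlgHom.toLinearMap_apply]
  | add s₁ s₂ h₁ h₂ => simp only [add_tmul, map_add, h₁, h₂]

variable (ΦF : QB δ →ₗ[k] A)

theorem PhiF_eq (hF : IsGauge δ F)
    (hΦ : ∀ x y : A, ΦF (Submodule.Quotient.mk (x ⊗ₜ[k] y)) = F x * y) :
    ΦF = muQ δ ∘ₗ Ftil δ F hF.2 := by
  apply qext
  intro x y
  simp only [hΦ, LinearMap.comp_apply, Ftil_mk, muQ_mk]

theorem claimT (κ : H →ₗ[k] A) (w : H ⊗[k] H) :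
    LinearMap.mul' k (A ⊗[k] H)
      (TensorProduct.map ((iC (k := k) (A := A)) ∘ₗ SH) (inlA ∘ₗ κ) w) =
      TensorProduct.map κ SH ((TensorProduct.comm k H H) w) := by
  induction w using TensorProduct.induction_on with
  | zero => simp only [map_zero]
  | tmul g g' =>
    simp only [TensorProduct.map_tmul, LinearMap.comp_apply, iC_apply, inlA_apply,
      LinearMap.mul'_apply, Algebra.TensorProduct.tmul_mul_tmul, one_mul, mul_one,
      TensorProduct.comm_tmul]
  | add w₁ w₂ h₁ h₂ => simp only [map_add, h₁, h₂]

theorem uF_eq (hχ : ∀ z : A ⊗[k] A, χ (Submodule.Quotient.mk z) = canMap δ z)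
    (hδ : IsCoaction δ) (hF : IsGauge δ F)
    (hΦ : ∀ x y : A, ΦF (Submodule.Quotient.mk (x ⊗ₜ[k] y)) = F x * y) :
    (V δ ∘ₗ Ftil δ F hF.2) ∘ₗ tauMap δ χ =
      conv (A ⊗[k] H) (iC ∘ₗ SH) (inlA ∘ₗ (ΦF ∘ₗ tauMap δ χ)) := by
  apply LinearMap.ext
  intro h
  rw [conv_apply, claimT, PhiF_eq δ F ΦF hF hΦ]
  have hv := LinearMap.congr_fun (Vdec δ F hF) (tauMap δ χ h)
  simp only [LinearMap.comp_apply] at hv ⊢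
  rw [hv, cobar1_tau δ χ hχ hδ]
  have e1 : TensorProduct.map ((muQ δ ∘ₗ Ftil δ F hF.2) ∘ₗ tauMap δ χ)
      ((LinearMap.id : H →ₗ[k] H) ∘ₗ SH) =
      (muQ δ ∘ₗ Ftil δ F hF.2).rTensor H ∘ₗ TensorProduct.map (tauMap δ χ) SH :=
    TensorProduct.map_comp _ _ _ _
  rw [LinearMap.id_comp] at e1
  have e2 := LinearMap.congr_fun e1 ((TensorProduct.comm k H H) (ΔH h))
  simp only [LinearMap.comp_apply] at e2
  exact e2.symm

theorem KF_cobar (hF : IsGauge δ F)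
    (hΦ : ∀ x y : A, ΦF (Submodule.Quotient.mk (x ⊗ₜ[k] y)) = F x * y) :
    LinearMap.mul' k (A ⊗[k] H) ∘ₗ TensorProduct.map (V δ ∘ₗ Ftil δ F hF.2) iC ∘ₗ cobar δ =
      δ.toLinearMap ∘ₗ ΦF := by
  apply qext
  intro x y
  simp only [LinearMap.comp_apply, cobar_mk, hΦ, AlgHom.toLinearMap_apply]
  have hW : ∀ x y : A, (V δ ∘ₗ Ftil δ F hF.2) (Submodule.Quotient.mk (x ⊗ₜ[k] y)) =
      (((LinearMap.mul k A).flip y) ∘ₗ F.toLinearMap).rTensor H (δ x) := by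
    intro x y
    simp only [LinearMap.comp_apply]
    exact VFtil_mk δ F hF x y
  rw [Kaux δ _ F.toLinearMap hW x (δ y), ← hF.1 x, ← map_mul]

theorem m_eq (hχ : ∀ z : A ⊗[k] A, χ (Submodule.Quotient.mk z) = canMap δ z)
    (hδ : IsCoaction δ) (hF : IsGauge δ F)
    (hΦ : ∀ x y : A, ΦF (Submodule.Quotient.mk (x ⊗ₜ[k] y)) = F x * y) :
    δ.toLinearMap ∘ₗ (ΦF ∘ₗ tauMap δ χ) =
      conv (A ⊗[k] H) ((V δ ∘ₗ Ftil δ F hF.2) ∘ₗ tauMap δ χ) iC := by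
  apply LinearMap.ext
  intro h
  rw [conv_apply]
  have e1 : TensorProduct.map ((V δ ∘ₗ Ftil δ F hF.2) ∘ₗ tauMap δ χ) (iC (k := k) (A := A)) =
      TensorProduct.map (V δ ∘ₗ Ftil δ F hF.2) iC ∘ₗ (tauMap δ χ).rTensor H := by
    have h0 := TensorProduct.map_comp (V δ ∘ₗ Ftil δ F hF.2)
      (iC (k := k) (A := A)) (tauMap δ χ) (LinearMap.id : H →ₗ[k] H)
    rw [LinearMap.comp_id] at h0
    exact h0
  rw [e1]
  simp only [LinearMap.comp_apply, AlgHom.toLinearMap_apply]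
  rw [← cobar_tau δ χ hχ hδ]
  have h2 := LinearMap.congr_fun (KF_cobar δ F ΦF hF hΦ) (tauMap δ χ h)
  simp only [LinearMap.comp_apply, AlgHom.toLinearMap_apply] at h2
  rw [h2]

theorem p_eq_q (hχ : ∀ z : A ⊗[k] A, χ (Submodule.Quotient.mk z) = canMap δ z)
    (hδ : IsCoaction δ) (hF : IsGauge δ F)
    (hΦ : ∀ x y : A, ΦF (Submodule.Quotient.mk (x ⊗ₜ[k] y)) = F x * y) :
    conv (A ⊗[k] H) iC (δ.toLinearMap ∘ₗ (ΦF ∘ₗ tauMap δ χ)) =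
      conv (A ⊗[k] H) (inlA ∘ₗ (ΦF ∘ₗ tauMap δ χ)) iC := by
  rw [m_eq δ χ F ΦF hχ hδ hF hΦ, uF_eq δ χ F ΦF hχ hδ hF hΦ]
  rw [← conv_assoc, ← conv_assoc, conv_iC_sC, conv_cunit_left]

end Ids

end GaugeAux

namespace GaugeAux

section Final

variable {k A H : Type*} [Field k] [Ring A] [Algebra k A]
  [Ring H] [HopfAlgebra k H]

local notation "εH" => Coalgebra.counit (R := k) (A := H)
local notation "ΔH" => Coalgebra.comul (R := k) (A := H)
local notation "SH" => HopfAlgebra.antipode (R := k) (A := H)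

variable (δ : A →ₐ[k] A ⊗[k] H) (χ : QB δ ≃ₗ[k] A ⊗[k] H)
  (F : A →ₐ[k] A) (ΦF : QB δ →ₗ[k] A)

/-- the candidate inverse `a ↦ a₍₀₎ ΦF(τ(a₍₁₎))`. -/
def FinvM : A →ₗ[k] A :=
  LinearMap.mul' k A ∘ₗ LinearMap.lTensor A (ΦF ∘ₗ tauMap δ χ) ∘ₗ δ.toLinearMap

theorem FinvM_apply (a : A) :
    FinvM δ χ ΦF a =
      LinearMap.mul' k A (LinearMap.lTensor A (ΦF ∘ₗ tauMap δ χ) (δ a)) := rfl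

theorem PhiF_Lmul (hΦ : ∀ x y : A, ΦF (Submodule.Quotient.mk (x ⊗ₜ[k] y)) = F x * y)
    (a : A) : ΦF ∘ₗ Lmul δ a = LinearMap.mulLeft k (F a) ∘ₗ ΦF := by
  apply qext
  intro x y
  simp only [LinearMap.comp_apply, Lmul_mk, hΦ, map_mul, mul_assoc,
    LinearMap.mulLeft_apply]

theorem Minv' (hχ : ∀ z : A ⊗[k] A, χ (Submodule.Quotient.mk z) = canMap δ z)
    (hΦ : ∀ x y : A, ΦF (Submodule.Quotient.mk (x ⊗ₜ[k] y)) = F x * y)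
    (t : A ⊗[k] H) :
    LinearMap.mul' k A (LinearMap.lTensor A (ΦF ∘ₗ tauMap δ χ)
      (F.toLinearMap.rTensor H t)) = ΦF (χ.symm t) := by
  induction t using TensorProduct.induction_on with
  | zero => simp only [map_zero]
  | tmul a h =>
    simp only [LinearMap.rTensor_tmul, LinearMap.lTensor_tmul, LinearMap.comp_apply,
      LinearMap.mul'_apply, AlgHom.toLinearMap_apply, chi_symm_tmul δ χ hχ]
    have := LinearMap.congr_fun (PhiF_Lmul δ F ΦF hΦ a) (tauMap δ χ h)
    simp only [LinearMap.comp_apply, LinearMap.mulLeft_apply] at this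
    rw [this]
  | add t₁ t₂ h₁ h₂ => simp only [map_add, h₁, h₂]

theorem Finv_F (hχ : ∀ z : A ⊗[k] A, χ (Submodule.Quotient.mk z) = canMap δ z)
    (hF : IsGauge δ F)
    (hΦ : ∀ x y : A, ΦF (Submodule.Quotient.mk (x ⊗ₜ[k] y)) = F x * y)
    (a : A) : FinvM δ χ ΦF (F a) = a := by
  rw [FinvM_apply, hF.1 a, Minv' δ χ F ΦF hχ hΦ, mk_one δ χ hχ, hΦ, map_one, one_mul]

theorem kap_one (hχ : ∀ z : A ⊗[k] A, χ (Submodule.Quotient.mk z) = canMap δ z)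
    (hΦ : ∀ x y : A, ΦF (Submodule.Quotient.mk (x ⊗ₜ[k] y)) = F x * y) :
    ΦF (tauMap δ χ 1) = 1 := by
  have h1 : tauMap δ χ 1 = χ.symm (δ 1) := by
    rw [map_one δ, Algebra.TensorProduct.one_def]
    rfl
  rw [h1, mk_one δ χ hχ, hΦ, map_one, one_mul]

theorem Finv_one (hχ : ∀ z : A ⊗[k] A, χ (Submodule.Quotient.mk z) = canMap δ z)
    (hΦ : ∀ x y : A, ΦF (Submodule.Quotient.mk (x ⊗ₜ[k] y)) = F x * y) :
    FinvM δ χ ΦF 1 = 1 := by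
  rw [FinvM_apply, map_one δ, Algebra.TensorProduct.one_def]
  simp only [LinearMap.lTensor_tmul, LinearMap.comp_apply, LinearMap.mul'_apply]
  rw [kap_one δ χ F ΦF hχ hΦ, mul_one]

theorem Finv_coinv (hχ : ∀ z : A ⊗[k] A, χ (Submodule.Quotient.mk z) = canMap δ z)
    (hΦ : ∀ x y : A, ΦF (Submodule.Quotient.mk (x ⊗ₜ[k] y)) = F x * y)
    {b : A} (hb : b ∈ coinv δ) : FinvM δ χ ΦF b = b := by
  rw [FinvM_apply, show δ b = b ⊗ₜ[k] (1:H) from hb]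
  simp only [LinearMap.lTensor_tmul, LinearMap.comp_apply, LinearMap.mul'_apply]
  rw [kap_one δ χ F ΦF hχ hΦ, mul_one]

theorem PsiLmul (hFB : ∀ b ∈ coinv δ, F b = b) (a : A) :
    (muQ δ ∘ₗ Gtil δ F hFB) ∘ₗ Lmul δ a =
      LinearMap.mulLeft k a ∘ₗ (muQ δ ∘ₗ Gtil δ F hFB) := by
  apply qext
  intro x y
  simp only [LinearMap.comp_apply, Lmul_mk, Gtil_mk, muQ_mk, LinearMap.mulLeft_apply,
    mul_assoc]

theorem F_rep (hχ : ∀ z : A ⊗[k] A, χ (Submodule.Quotient.mk z) = canMap δ z)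
    (hFB : ∀ b ∈ coinv δ, F b = b) :
    F.toLinearMap = LinearMap.mul' k A ∘ₗ
      LinearMap.lTensor A ((muQ δ ∘ₗ Gtil δ F hFB) ∘ₗ tauMap δ χ) ∘ₗ δ.toLinearMap := by
  apply LinearMap.ext
  intro a
  have hrep : ∀ t : A ⊗[k] H,
      LinearMap.mul' k A (LinearMap.lTensor A ((muQ δ ∘ₗ Gtil δ F hFB) ∘ₗ tauMap δ χ) t) =
        (muQ δ ∘ₗ Gtil δ F hFB) (χ.symm t) := by
    intro t
    induction t using TensorProduct.induction_on with
    | zero => simp only [map_zero]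
    | tmul a' h =>
      simp only [LinearMap.lTensor_tmul, LinearMap.comp_apply, LinearMap.mul'_apply,
        chi_symm_tmul δ χ hχ]
      have := LinearMap.congr_fun (PsiLmul δ F hFB a') (tauMap δ χ h)
      simp only [LinearMap.comp_apply, LinearMap.mulLeft_apply] at this
      rw [this]
    | add t₁ t₂ h₁ h₂ => simp only [map_add, h₁, h₂]
  simp only [LinearMap.comp_apply, AlgHom.toLinearMap_apply]
  rw [hrep (δ a), mk_one δ χ hχ]
  simp only [LinearMap.comp_apply, Gtil_mk, muQ_mk, one_mul]

theorem Y_cobar (hχ : ∀ z : A ⊗[k] A, χ (Submodule.Quotient.mk z) = canMap δ z)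
    (hFB : ∀ b ∈ coinv δ, F b = b)
    (hΦ : ∀ x y : A, ΦF (Submodule.Quotient.mk (x ⊗ₜ[k] y)) = F x * y) :
    LinearMap.mul' k A ∘ₗ
        TensorProduct.map ΦF ((muQ δ ∘ₗ Gtil δ F hFB) ∘ₗ tauMap δ χ) ∘ₗ cobar δ =
      F.toLinearMap ∘ₗ muQ δ := by
  apply qext
  intro x y
  simp only [LinearMap.comp_apply, cobar_mk, muQ_mk, AlgHom.toLinearMap_apply]
  have Yaux : ∀ t : A ⊗[k] H,
      LinearMap.mul' k A (TensorProduct.map ΦF ((muQ δ ∘ₗ Gtil δ F hFB) ∘ₗ tauMap δ χ)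
        ((mkk δ).rTensor H ((TensorProduct.assoc k A A H).symm (x ⊗ₜ[k] t)))) =
      F x * LinearMap.mul' k A
        (LinearMap.lTensor A ((muQ δ ∘ₗ Gtil δ F hFB) ∘ₗ tauMap δ χ) t) := by
    intro t
    induction t using TensorProduct.induction_on with
    | zero => simp only [tmul_zero, map_zero, mul_zero]
    | tmul c h =>
      simp only [TensorProduct.assoc_symm_tmul, LinearMap.rTensor_tmul, Submodule.mkQ_apply,
        TensorProduct.map_tmul, LinearMap.lTensor_tmul, LinearMap.mul'_apply, hΦ, mul_assoc]
    | add t₁ t₂ h₁ h₂ => simp only [tmul_add, map_add, mul_add, h₁, h₂]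
  rw [Yaux (δ y)]
  have := LinearMap.congr_fun (F_rep δ χ F hχ hFB) y
  simp only [LinearMap.comp_apply, AlgHom.toLinearMap_apply] at this
  rw [← this, map_mul]

theorem kappa_lam (hχ : ∀ z : A ⊗[k] A, χ (Submodule.Quotient.mk z) = canMap δ z)
    (hδ : IsCoaction δ) (hFB : ∀ b ∈ coinv δ, F b = b)
    (hΦ : ∀ x y : A, ΦF (Submodule.Quotient.mk (x ⊗ₜ[k] y)) = F x * y) (h : H) :
    LinearMap.mul' k A (TensorProduct.map (ΦF ∘ₗ tauMap δ χ)
      ((muQ δ ∘ₗ Gtil δ F hFB) ∘ₗ tauMap δ χ) (ΔH h)) = εH h • (1 : A) := by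
  have e1 : TensorProduct.map (ΦF ∘ₗ tauMap δ χ)
      (((muQ δ ∘ₗ Gtil δ F hFB) ∘ₗ tauMap δ χ) ∘ₗ (LinearMap.id : H →ₗ[k] H)) =
      TensorProduct.map ΦF ((muQ δ ∘ₗ Gtil δ F hFB) ∘ₗ tauMap δ χ) ∘ₗ
        (tauMap δ χ).rTensor H :=
    TensorProduct.map_comp _ _ _ _
  rw [LinearMap.comp_id] at e1
  rw [e1]
  simp only [LinearMap.comp_apply]
  rw [← cobar_tau δ χ hχ hδ]
  have h2 := LinearMap.congr_fun (Y_cobar δ χ F ΦF hχ hFB hΦ) (tauMap δ χ h)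
  simp only [LinearMap.comp_apply, AlgHom.toLinearMap_apply] at h2
  rw [h2, muQ_tau δ χ hχ hδ, map_smul, map_one]

theorem delta_mul (w : A ⊗[k] A) :
    δ (LinearMap.mul' k A w) =
      LinearMap.mul' k (A ⊗[k] H) (TensorProduct.map δ.toLinearMap δ.toLinearMap w) := by
  induction w using TensorProduct.induction_on with
  | zero => simp only [map_zero]
  | tmul x y => simp only [LinearMap.mul'_apply, TensorProduct.map_tmul, map_mul,
      AlgHom.toLinearMap_apply]
  | add w₁ w₂ h₁ h₂ => simp only [map_add, h₁, h₂]

theorem equivar (hχ : ∀ z : A ⊗[k] A, χ (Submodule.Quotient.mk z) = canMap δ z)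
    (hδ : IsCoaction δ) (hF : IsGauge δ F)
    (hΦ : ∀ x y : A, ΦF (Submodule.Quotient.mk (x ⊗ₜ[k] y)) = F x * y)
    (a : A) :
    δ (FinvM δ χ ΦF a) = (FinvM δ χ ΦF).rTensor H (δ a) := by
  have e0 : TensorProduct.map δ.toLinearMap δ.toLinearMap ∘ₗ
      LinearMap.lTensor A (ΦF ∘ₗ tauMap δ χ) =
      TensorProduct.map δ.toLinearMap (δ.toLinearMap ∘ₗ (ΦF ∘ₗ tauMap δ χ)) := by
    have h0 := TensorProduct.map_comp δ.toLinearMap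
      δ.toLinearMap (LinearMap.id : A →ₗ[k] A) (ΦF ∘ₗ tauMap δ χ)
    rw [LinearMap.comp_id] at h0
    exact h0.symm
  have e1 : TensorProduct.map δ.toLinearMap (δ.toLinearMap ∘ₗ (ΦF ∘ₗ tauMap δ χ)) =
      LinearMap.lTensor (A ⊗[k] H) (δ.toLinearMap ∘ₗ (ΦF ∘ₗ tauMap δ χ)) ∘ₗ
        δ.toLinearMap.rTensor H := by
    have h0 := TensorProduct.map_comp (LinearMap.id : (A ⊗[k] H) →ₗ[k] (A ⊗[k] H))
      (δ.toLinearMap ∘ₗ (ΦF ∘ₗ tauMap δ χ)) δ.toLinearMap (LinearMap.id : H →ₗ[k] H)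
    rw [LinearMap.id_comp, LinearMap.comp_id] at h0
    exact h0
  have Emap : LinearMap.mul' k (A ⊗[k] H) ∘ₗ
      LinearMap.lTensor (A ⊗[k] H) (δ.toLinearMap ∘ₗ (ΦF ∘ₗ tauMap δ χ)) ∘ₗ
        Theta (k := k) =
      (LinearMap.mul' k A ∘ₗ LinearMap.lTensor A (ΦF ∘ₗ tauMap δ χ)).rTensor H ∘ₗ
        Theta (k := k) := by
    apply TensorProduct.ext'
    intro a' h
    have hth : Theta (k := k) (a' ⊗ₜ[k] h) =
        (TensorProduct.assoc k A H H).symm (a' ⊗ₜ[k] ΔH h) := by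
      simp only [Theta, LinearMap.comp_apply, LinearMap.lTensor_tmul, LinearEquiv.coe_coe]
    simp only [LinearMap.comp_apply, hth]
    have hE1 : ∀ w : H ⊗[k] H,
        LinearMap.mul' k (A ⊗[k] H) (LinearMap.lTensor (A ⊗[k] H)
          (δ.toLinearMap ∘ₗ (ΦF ∘ₗ tauMap δ χ))
          ((TensorProduct.assoc k A H H).symm (a' ⊗ₜ[k] w))) =
        (a' ⊗ₜ[k] (1:H)) * LinearMap.mul' k (A ⊗[k] H)
          (TensorProduct.map iC (δ.toLinearMap ∘ₗ (ΦF ∘ₗ tauMap δ χ)) w) := by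
      intro w
      induction w using TensorProduct.induction_on with
      | zero => simp only [tmul_zero, map_zero, mul_zero]
      | tmul g g' =>
        simp only [TensorProduct.assoc_symm_tmul, LinearMap.lTensor_tmul,
          TensorProduct.map_tmul, LinearMap.mul'_apply, iC_apply]
        rw [← mul_assoc, Algebra.TensorProduct.tmul_mul_tmul, mul_one, one_mul]
      | add w₁ w₂ h₁ h₂ => simp only [tmul_add, map_add, mul_add, h₁, h₂]
    have hE2 : ∀ w : H ⊗[k] H,
        (LinearMap.mul' k A ∘ₗ LinearMap.lTensor A (ΦF ∘ₗ tauMap δ χ)).rTensor H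
          ((TensorProduct.assoc k A H H).symm (a' ⊗ₜ[k] w)) =
        (a' ⊗ₜ[k] (1:H)) * LinearMap.mul' k (A ⊗[k] H)
          (TensorProduct.map (inlA ∘ₗ (ΦF ∘ₗ tauMap δ χ)) iC w) := by
      intro w
      induction w using TensorProduct.induction_on with
      | zero => simp only [tmul_zero, map_zero, mul_zero]
      | tmul g g' =>
        simp only [TensorProduct.assoc_symm_tmul, LinearMap.rTensor_tmul,
          TensorProduct.map_tmul, LinearMap.comp_apply, LinearMap.lTensor_tmul,
          LinearMap.mul'_apply, iC_apply, inlA_apply,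
          Algebra.TensorProduct.tmul_mul_tmul, mul_one, one_mul]
      | add w₁ w₂ h₁ h₂ => simp only [tmul_add, map_add, mul_add, h₁, h₂]
    rw [hE1 (ΔH h), hE2 (ΔH h)]
    have hpq := LinearMap.congr_fun
      (p_eq_q δ χ F ΦF hχ hδ hF hΦ) h
    rw [conv_apply, conv_apply] at hpq
    rw [hpq]
  -- now assemble
  have step1 : δ (FinvM δ χ ΦF a) =
      LinearMap.mul' k (A ⊗[k] H) (LinearMap.lTensor (A ⊗[k] H)
        (δ.toLinearMap ∘ₗ (ΦF ∘ₗ tauMap δ χ)) (Theta (k := k) (δ a))) := by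
    rw [FinvM_apply, delta_mul]
    rw [← LinearMap.comp_apply (TensorProduct.map δ.toLinearMap δ.toLinearMap)
      (LinearMap.lTensor A (ΦF ∘ₗ tauMap δ χ)), e0]
    rw [e1, LinearMap.comp_apply, coassoc_delta δ hδ]
  rw [step1]
  have := LinearMap.congr_fun Emap (δ a)
  simp only [LinearMap.comp_apply] at this
  rw [this, ← coassoc_delta δ hδ]
  rw [← LinearMap.comp_apply ((LinearMap.mul' k A ∘ₗ
    LinearMap.lTensor A (ΦF ∘ₗ tauMap δ χ)).rTensor H) (δ.toLinearMap.rTensor H),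
    ← LinearMap.rTensor_comp]
  rfl

theorem F_Finv (hχ : ∀ z : A ⊗[k] A, χ (Submodule.Quotient.mk z) = canMap δ z)
    (hδ : IsCoaction δ) (hF : IsGauge δ F)
    (hΦ : ∀ x y : A, ΦF (Submodule.Quotient.mk (x ⊗ₜ[k] y)) = F x * y)
    (a : A) : F (FinvM δ χ ΦF a) = a := by
  have h1 := LinearMap.congr_fun (F_rep δ χ F hχ hF.2) (FinvM δ χ ΦF a)
  simp only [LinearMap.comp_apply, AlgHom.toLinearMap_apply] at h1
  rw [h1, equivar δ χ F ΦF hχ hδ hF hΦ]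
  have e1 : LinearMap.lTensor A ((muQ δ ∘ₗ Gtil δ F hF.2) ∘ₗ tauMap δ χ) ∘ₗ
      (FinvM δ χ ΦF).rTensor H =
      TensorProduct.map (FinvM δ χ ΦF) ((muQ δ ∘ₗ Gtil δ F hF.2) ∘ₗ tauMap δ χ) := by
    have h0 := TensorProduct.map_comp (LinearMap.id : A →ₗ[k] A)
      ((muQ δ ∘ₗ Gtil δ F hF.2) ∘ₗ tauMap δ χ) (FinvM δ χ ΦF) (LinearMap.id : H →ₗ[k] H)
    rw [LinearMap.id_comp, LinearMap.comp_id] at h0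
    exact h0.symm
  have e1' := LinearMap.congr_fun e1 (δ a)
  simp only [LinearMap.comp_apply] at e1'
  rw [e1']
  have e2 : TensorProduct.map (FinvM δ χ ΦF) ((muQ δ ∘ₗ Gtil δ F hF.2) ∘ₗ tauMap δ χ) =
      TensorProduct.map (LinearMap.mul' k A ∘ₗ LinearMap.lTensor A (ΦF ∘ₗ tauMap δ χ))
        ((muQ δ ∘ₗ Gtil δ F hF.2) ∘ₗ tauMap δ χ) ∘ₗ δ.toLinearMap.rTensor H := by
    have h0 := TensorProduct.map_comp
      (LinearMap.mul' k A ∘ₗ LinearMap.lTensor A (ΦF ∘ₗ tauMap δ χ))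
      ((muQ δ ∘ₗ Gtil δ F hF.2) ∘ₗ tauMap δ χ) δ.toLinearMap (LinearMap.id : H →ₗ[k] H)
    rw [LinearMap.comp_id] at h0
    rw [show FinvM δ χ ΦF = (LinearMap.mul' k A ∘ₗ LinearMap.lTensor A (ΦF ∘ₗ tauMap δ χ)) ∘ₗ
      δ.toLinearMap from rfl]
    exact h0
  rw [e2, LinearMap.comp_apply, coassoc_delta δ hδ]
  have Gmap : ∀ (a' : A) (h : H),
      LinearMap.mul' k A (TensorProduct.map
        (LinearMap.mul' k A ∘ₗ LinearMap.lTensor A (ΦF ∘ₗ tauMap δ χ))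
        ((muQ δ ∘ₗ Gtil δ F hF.2) ∘ₗ tauMap δ χ)
        ((TensorProduct.assoc k A H H).symm (a' ⊗ₜ[k] ΔH h))) = εH h • a' := by
    intro a' h
    have hG1 : ∀ w : H ⊗[k] H,
        LinearMap.mul' k A (TensorProduct.map
          (LinearMap.mul' k A ∘ₗ LinearMap.lTensor A (ΦF ∘ₗ tauMap δ χ))
          ((muQ δ ∘ₗ Gtil δ F hF.2) ∘ₗ tauMap δ χ)
          ((TensorProduct.assoc k A H H).symm (a' ⊗ₜ[k] w))) =
        a' * LinearMap.mul' k A (TensorProduct.map (ΦF ∘ₗ tauMap δ χ)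
          ((muQ δ ∘ₗ Gtil δ F hF.2) ∘ₗ tauMap δ χ) w) := by
      intro w
      induction w using TensorProduct.induction_on with
      | zero => simp only [tmul_zero, map_zero, mul_zero]
      | tmul g g' =>
        simp only [TensorProduct.assoc_symm_tmul, TensorProduct.map_tmul,
          LinearMap.comp_apply, LinearMap.lTensor_tmul, LinearMap.mul'_apply, mul_assoc]
      | add w₁ w₂ h₁ h₂ => simp only [tmul_add, map_add, mul_add, h₁, h₂]
    rw [hG1 (ΔH h), kappa_lam δ χ F ΦF hχ hδ hF.2 hΦ, mul_smul_comm, mul_one]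
  -- δ a expansion
  have expand : ∀ t : A ⊗[k] H,
      LinearMap.mul' k A (TensorProduct.map
        (LinearMap.mul' k A ∘ₗ LinearMap.lTensor A (ΦF ∘ₗ tauMap δ χ))
        ((muQ δ ∘ₗ Gtil δ F hF.2) ∘ₗ tauMap δ χ) (Theta (k := k) t)) =
      E2 (k := k) t := by
    intro t
    induction t using TensorProduct.induction_on with
    | zero => simp only [map_zero]
    | tmul a' h =>
      have hth : Theta (k := k) (a' ⊗ₜ[k] h) =
          (TensorProduct.assoc k A H H).symm (a' ⊗ₜ[k] ΔH h) := by
        simp only [Theta, LinearMap.comp_apply, LinearMap.lTensor_tmul, LinearEquiv.coe_coe]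
      rw [hth, Gmap, E2_tmul]
    | add t₁ t₂ h₁ h₂ => simp only [map_add, h₁, h₂]
  rw [expand (δ a), E2_delta δ hδ]

theorem Finv_mul (hχ : ∀ z : A ⊗[k] A, χ (Submodule.Quotient.mk z) = canMap δ z)
    (hδ : IsCoaction δ) (hF : IsGauge δ F)
    (hΦ : ∀ x y : A, ΦF (Submodule.Quotient.mk (x ⊗ₜ[k] y)) = F x * y)
    (a a' : A) :
    FinvM δ χ ΦF (a * a') = FinvM δ χ ΦF a * FinvM δ χ ΦF a' := by
  have hinj : Function.Injective F := by
    intro u v huv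
    have h1 := Finv_F δ χ F ΦF hχ hF hΦ u
    have h2 := Finv_F δ χ F ΦF hχ hF hΦ v
    rw [← h1, ← h2, huv]
  apply hinj
  rw [map_mul F, F_Finv δ χ F ΦF hχ hδ hF hΦ, F_Finv δ χ F ΦF hχ hδ hF hΦ,
    F_Finv δ χ F ΦF hχ hδ hF hΦ]

end Final

end GaugeAux


/-- for a faithfully flat Hopf–Galois extension the gauge
transformations form a group under composition, and the inverse of `F` is
`F⁻¹(a) = a₍₀₎ F(a₍₁₎⁽¹⁾) a₍₁₎⁽²⁾`. -/
theorem gauge_transformations_group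
    (δ : A →ₐ[k] A ⊗[k] H) (hδ : IsCoaction δ)
    (χ : QB δ ≃ₗ[k] A ⊗[k] H)
    (hχ : ∀ z : A ⊗[k] A, χ (Submodule.Quotient.mk z) = canMap δ z)
    (hff : FaithfullyFlatCoinv δ) :
    IsGauge δ (AlgHom.id k A) ∧
    (∀ F G : A →ₐ[k] A, IsGauge δ F → IsGauge δ G → IsGauge δ (F.comp G)) ∧
    (∀ F : A →ₐ[k] A, IsGauge δ F →
      ∀ ΦF : QB δ →ₗ[k] A,
        (∀ x y : A, ΦF (Submodule.Quotient.mk (x ⊗ₜ[k] y)) = F x * y) →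
        ∀ Finv : A →ₗ[k] A,
          Finv = (TensorProduct.lift
              (((LinearMap.llcomp k H A A).flip (ΦF ∘ₗ tauMap δ χ)) ∘ₗ
                (LinearMap.mul k A))) ∘ₗ δ.toLinearMap →
          (∀ a : A, Finv (F a) = a) ∧ (∀ a : A, F (Finv a) = a) ∧
          (∀ a a' : A, Finv (a * a') = Finv a * Finv a') ∧
          Finv 1 = 1 ∧
          (∀ a : A, δ (Finv a) = (LinearMap.rTensor H Finv) (δ a)) ∧
          (∀ b ∈ coinv δ, Finv b = b)) := by
  refine ⟨⟨?_, ?_⟩, ?_, ?_⟩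
  · intro a
    show δ a = LinearMap.rTensor H (AlgHom.id k A).toLinearMap (δ a)
    rw [show (AlgHom.id k A).toLinearMap = LinearMap.id from rfl, LinearMap.rTensor_id]
    rfl
  · intro b _
    rfl
  · intro F G hF hG
    constructor
    · intro a
      show δ (F (G a)) = _
      rw [hF.1, hG.1, ← LinearMap.comp_apply, ← LinearMap.rTensor_comp]
      rfl
    · intro b hb
      show F (G b) = b
      rw [hG.2 b hb, hF.2 b hb]
  · intro F hF ΦF hΦ Finv hFinv
    have hlift : (TensorProduct.lift
        (((LinearMap.llcomp k H A A).flip (ΦF ∘ₗ tauMap δ χ)) ∘ₗ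
          (LinearMap.mul k A))) =
        LinearMap.mul' k A ∘ₗ LinearMap.lTensor A (ΦF ∘ₗ tauMap δ χ) := by
      apply TensorProduct.ext'
      intro a h
      simp [TensorProduct.lift.tmul, LinearMap.llcomp_apply, LinearMap.flip_apply,
        LinearMap.mul_apply', LinearMap.mul'_apply]
    have hEq : Finv = GaugeAux.FinvM δ χ ΦF := by
      rw [hFinv, hlift, GaugeAux.FinvM, LinearMap.comp_assoc]
    subst hEq
    exact ⟨GaugeAux.Finv_F δ χ F ΦF hχ hF hΦ, GaugeAux.F_Finv δ χ F ΦF hχ hδ hF hΦ,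
      GaugeAux.Finv_mul δ χ F ΦF hχ hδ hF hΦ, GaugeAux.Finv_one δ χ F ΦF hχ hΦ,
      GaugeAux.equivar δ χ F ΦF hχ hδ hF hΦ,
      fun _ hb => GaugeAux.Finv_coinv δ χ F ΦF hχ hΦ hb⟩

end
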